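/- Let Ω ⊂ ℝⁿ be open, 𝓘(t) bounded, G ∈ C_b(Ω_𝓘 × 𝕋ⁿ), and f₀ ∈ C_c(Ω × 𝕋ⁿ) (continuous with compact support). Then for each fixed t, the double series-integral ∫_Ω Σ_{n⃗ ∈ ℤⁿ} |Ĝ(I + 𝓘(t), n⃗)| · |f̂₀(I, −n⃗)| dI is finite. -/

import Mathlib

open MeasureTheory Filter Finset

/-- The fundamental domain `[0, 2π)ⁿ` of the torus `𝕋ⁿ = ℝⁿ/2πℤⁿ`. -/
def torusBox (n : ℕ) : Set (Fin n → ℝ) := Set.univ.pi fun _ => Set.Ico (0:ℝ) (2 * Real.pi)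

/-- Fourier coefficient in the angle variable. -/
noncomputable def fourierCoeff' {n : ℕ} (G : (Fin n → ℝ) → (Fin n → ℝ) → ℂ)
    (I : Fin n → ℝ) (v : Fin n → ℤ) : ℂ :=
  ((2 * Real.pi) ^ n : ℝ)⁻¹ •
    ∫ θ in torusBox n, G I θ * Complex.exp (-(Complex.I * ((∑ i, (v i : ℝ) * θ i : ℝ) : ℂ)))


lemma torusBox_meas (n : ℕ) : MeasurableSet (torusBox n) :=
  MeasurableSet.univ_pi fun _ => measurableSet_Ico

lemma volume_torusBox (n : ℕ) :
    volume (torusBox n) = ENNReal.ofReal ((2 * Real.pi) ^ n) := by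
  rw [torusBox, volume_pi_pi]
  simp [Real.volume_Ico, ← ENNReal.ofReal_pow Real.two_pi_pos.le]
  rw [ENNReal.ofReal_pow (by positivity), ENNReal.ofReal_mul zero_le_two]; norm_num

lemma int1d (k : ℤ) :
    ∫ x in Set.Ico (0:ℝ) (2 * Real.pi), Complex.exp (Complex.I * k * x)
      = if k = 0 then ((2 * Real.pi : ℝ) : ℂ) else 0 := by
  rw [setIntegral_congr_set MeasureTheory.Ico_ae_eq_Ioc,
    ← intervalIntegral.integral_of_le Real.two_pi_pos.le]
  rcases eq_or_ne k 0 with hk | hk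
  · simp [hk, Complex.real_smul]
  · rw [if_neg hk]
    have hc : (Complex.I * (k : ℂ)) ≠ 0 := by
      simp [Complex.I_ne_zero, Complex.ext_iff, hk]
    rw [integral_exp_mul_complex hc]
    have h1 : Complex.I * (k : ℂ) * ((2 * Real.pi : ℝ) : ℂ)
        = (k : ℂ) * (2 * (Real.pi : ℂ) * Complex.I) := by push_cast; ring
    rw [h1, Complex.exp_int_mul_two_pi_mul_I]
    simp

lemma intBox {n : ℕ} (f : Fin n → ℝ → ℂ) :
    ∫ θ in torusBox n, ∏ i, f i (θ i)
      = ∏ i, ∫ x in Set.Ico (0:ℝ) (2 * Real.pi), f i x := by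
  rw [← MeasureTheory.integral_indicator (torusBox_meas n)]
  have h : (torusBox n).indicator (fun θ => ∏ i, f i (θ i))
      = fun θ => ∏ i, (Set.Ico (0:ℝ) (2 * Real.pi)).indicator (f i) (θ i) := by
    ext θ
    by_cases hθ : θ ∈ torusBox n
    · rw [Set.indicator_of_mem hθ]
      exact Finset.prod_congr rfl fun i _ =>
        (Set.indicator_of_mem (hθ i (Set.mem_univ i)) _).symm
    · rw [Set.indicator_of_notMem hθ]
      obtain ⟨i, hi⟩ : ∃ i, θ i ∉ Set.Ico (0:ℝ) (2 * Real.pi) := by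
        by_contra h; push_neg at h
        exact hθ fun i _ => h i
      exact (Finset.prod_eq_zero (Finset.mem_univ i)
        (Set.indicator_of_notMem hi _)).symm
  rw [h, MeasureTheory.integral_fintype_prod_volume_eq_prod]
  exact Finset.prod_congr rfl fun i _ =>
    MeasureTheory.integral_indicator measurableSet_Ico

lemma intExp {n : ℕ} (k : Fin n → ℤ) :
    ∫ θ in torusBox n, Complex.exp (Complex.I * ((∑ i, (k i : ℝ) * θ i : ℝ) : ℂ))
      = if k = 0 then (((2 * Real.pi) ^ n : ℝ) : ℂ) else 0 := by
  have h : ∀ θ : Fin n → ℝ, Complex.exp (Complex.I * ((∑ i, (k i : ℝ) * θ i : ℝ) : ℂ))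
      = ∏ i, Complex.exp (Complex.I * (k i : ℂ) * (θ i : ℂ)) := by
    intro θ
    rw [← Complex.exp_sum]
    congr 1
    push_cast
    rw [Finset.mul_sum]
    exact Finset.sum_congr rfl fun i _ => by ring
  simp_rw [h]
  rw [intBox fun i x => Complex.exp (Complex.I * (k i : ℂ) * (x : ℂ))]
  simp_rw [int1d]
  rcases eq_or_ne k 0 with hk | hk
  · subst hk; simp
  · obtain ⟨i, hi⟩ := Function.ne_iff.mp hk
    rw [if_neg hk]
    refine Finset.prod_eq_zero (Finset.mem_univ i) ?_
    rw [if_neg (by simpa using hi)]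

open ComplexConjugate in
lemma bessel' {n : ℕ} (g : (Fin n → ℝ) → (Fin n → ℝ) → ℂ) (I : Fin n → ℝ)
    (hf : Continuous fun θ => g I θ) {M : ℝ} (hMb : ∀ θ, ‖g I θ‖ ≤ M) :
    ∑' v : Fin n → ℤ, ((‖fourierCoeff' g I v‖₊ : ENNReal)) ^ 2
      ≤ ENNReal.ofReal (M ^ 2) := by
  have hM0 : 0 ≤ M := (norm_nonneg _).trans (hMb 0)
  set μ : Measure (Fin n → ℝ) := volume.restrict (torusBox n) with hμ
  have hμuniv : μ Set.univ = ENNReal.ofReal ((2 * Real.pi) ^ n) := by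
    rw [hμ, Measure.restrict_apply_univ, volume_torusBox]
  haveI : IsFiniteMeasure μ := ⟨by rw [hμuniv]; exact ENNReal.ofReal_lt_top⟩
  set P : ℝ := (2 * Real.pi) ^ n with hPdef
  have hP : 0 < P := by positivity
  set c : ℝ := (Real.sqrt P)⁻¹ with hcdef
  have hc : 0 < c := by positivity
  have hc2 : c ^ 2 = P⁻¹ := by
    rw [hcdef, inv_pow, Real.sq_sqrt hP.le]
  -- the exponential functions
  set eFun : (Fin n → ℤ) → (Fin n → ℝ) → ℂ := fun v θ =>
    (c : ℂ) * Complex.exp (Complex.I * ((∑ i, (v i : ℝ) * θ i : ℝ) : ℂ)) with heFun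
  have hnorm_exp : ∀ x : ℝ, ‖Complex.exp (Complex.I * (x : ℂ))‖ = 1 := by
    intro x
    rw [Complex.norm_exp]
    simp
  have heNorm : ∀ v θ, ‖eFun v θ‖ = c := by
    intro v θ
    rw [heFun]
    simp only [norm_mul, Complex.norm_real, hnorm_exp, mul_one,
      Real.norm_eq_abs, abs_of_pos hc]
  have hsumCont : ∀ v : Fin n → ℤ,
      Continuous fun θ : Fin n → ℝ => (∑ i, (v i : ℝ) * θ i : ℝ) :=
    fun v => continuous_finset_sum _ fun i _ => continuous_const.mul (continuous_apply i)
  have heCont : ∀ v, Continuous (eFun v) := fun v =>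
    continuous_const.mul (Complex.continuous_exp.comp
      (continuous_const.mul (Complex.continuous_ofReal.comp (hsumCont v))))
  have heMem : ∀ v, MemLp (eFun v) 2 μ := fun v =>
    MemLp.of_bound ((heCont v).aestronglyMeasurable) c
      (ae_of_all _ fun θ => (heNorm v θ).le)
  have hfMem : MemLp (fun θ => g I θ) 2 μ :=
    MemLp.of_bound hf.aestronglyMeasurable M (ae_of_all _ hMb)
  set E : (Fin n → ℤ) → Lp ℂ 2 μ := fun v => (heMem v).toLp (eFun v) with hE
  set F : Lp ℂ 2 μ := hfMem.toLp (fun θ => g I θ) with hF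
  -- inner products
  have inner_eq : ∀ (a b : (Fin n → ℝ) → ℂ) (ha : MemLp a 2 μ) (hb : MemLp b 2 μ),
      (inner ℂ (ha.toLp a) (hb.toLp b) : ℂ) = ∫ θ, conj (a θ) * b θ ∂μ := by
    intro a b ha hb
    rw [MeasureTheory.L2.inner_def]
    apply integral_congr_ae
    filter_upwards [ha.coeFn_toLp, hb.coeFn_toLp] with θ h1 h2
    rw [h1, h2, RCLike.inner_apply, mul_comm]
  have hconj : ∀ (x : ℝ), conj (Complex.exp (Complex.I * (x : ℂ)))
      = Complex.exp (-(Complex.I * (x : ℂ))) := by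
    intro x
    rw [← Complex.exp_conj]
    congr 1
    simp [Complex.conj_ofReal]
  -- orthonormality
  have horth : Orthonormal ℂ E := by
    rw [orthonormal_iff_ite]
    intro v w
    rw [hE]
    rw [inner_eq _ _ (heMem v) (heMem w)]
    have hptw : ∀ θ, conj (eFun v θ) * eFun w θ
        = ((c : ℂ) * (c : ℂ)) * Complex.exp
            (Complex.I * ((∑ i, ((w i - v i : ℤ) : ℝ) * θ i : ℝ) : ℂ)) := by
      intro θ
      rw [heFun]
      simp only [map_mul, Complex.conj_ofReal, hconj]
      rw [mul_mul_mul_comm, ← Complex.exp_add]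
      congr 1
      have : ((∑ i, ((w i - v i : ℤ) : ℝ) * θ i : ℝ) : ℂ)
          = ((∑ i, (w i : ℝ) * θ i : ℝ) : ℂ) - ((∑ i, (v i : ℝ) * θ i : ℝ) : ℂ) := by
        push_cast
        rw [← Finset.sum_sub_distrib]
        exact Finset.sum_congr rfl fun i _ => by ring
      rw [this]
      ring
    simp_rw [hptw]
    rw [integral_const_mul, intExp]
    rcases eq_or_ne v w with hvw | hvw
    · subst hvw
      rw [if_pos rfl, if_pos (show (fun i => v i - v i) = 0 by ext i; simp)]
      rw [← Complex.ofReal_mul, ← Complex.ofReal_mul, ← Complex.ofReal_one]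
      norm_cast
      rw [← sq, hc2]
      exact inv_mul_cancel₀ hP.ne'
    · rw [if_neg hvw, if_neg (fun h => hvw (funext fun i =>
        (sub_eq_zero.mp (by simpa using congrFun h i)).symm))]
      ring
  -- relation between coefficients and inner products
  have hcoef : ∀ v, (inner ℂ (E v) F : ℂ) = ((c * P : ℝ) : ℂ) * fourierCoeff' g I v := by
    intro v
    rw [hE, hF, inner_eq _ _ (heMem v) hfMem]
    have hptw : ∀ θ, conj (eFun v θ) * g I θ
        = (c : ℂ) * (g I θ * Complex.exp (-(Complex.I * ((∑ i, (v i : ℝ) * θ i : ℝ) : ℂ)))) := by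
      intro θ
      rw [heFun]
      simp only [map_mul, Complex.conj_ofReal, hconj]
      ring
    simp_rw [hptw]
    rw [integral_const_mul, fourierCoeff', Complex.real_smul, ← hPdef,
      ← mul_assoc, ← Complex.ofReal_mul,
      show c * P * P⁻¹ = c from by rw [mul_assoc, mul_inv_cancel₀ hP.ne', mul_one], hμ]
  -- Bessel
  have hbessel : ∑' v, ‖(inner ℂ (E v) F : ℂ)‖ ^ 2 ≤ ‖F‖ ^ 2 :=
    horth.tsum_inner_products_le F
  have hsumm : Summable fun v => ‖(inner ℂ (E v) F : ℂ)‖ ^ 2 :=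
    horth.inner_products_summable F
  have hcoefnorm : ∀ v, ‖fourierCoeff' g I v‖ ^ 2
      = (c * P)⁻¹ ^ 2 * ‖(inner ℂ (E v) F : ℂ)‖ ^ 2 := by
    intro v
    rw [hcoef v, norm_mul, mul_pow, Complex.norm_real, Real.norm_eq_abs,
      abs_of_pos (by positivity), ← mul_assoc, ← mul_pow,
      inv_mul_cancel₀ (by positivity), one_pow, one_mul]
  -- norm bound on F
  have hFnorm : ‖F‖ ^ 2 ≤ P * M ^ 2 := by
    have h1 : eLpNorm (fun θ => g I θ) 2 μ
        ≤ μ Set.univ ^ (2 : ℝ)⁻¹ * ENNReal.ofReal M := by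
      have := eLpNorm_le_of_ae_bound (μ := μ) (p := 2) (f := fun θ => g I θ)
        (ae_of_all _ hMb)
      simpa using this
    have h2 : ‖F‖ ≤ Real.sqrt P * M := by
      rw [hF, MeasureTheory.Lp.norm_toLp]
      calc (eLpNorm (fun θ => g I θ) 2 μ).toReal
          ≤ ((μ Set.univ ^ (2 : ℝ)⁻¹) * ENNReal.ofReal M).toReal := by
            apply ENNReal.toReal_mono _ h1
            exact ENNReal.mul_ne_top (by
              rw [hμuniv]; exact (ENNReal.rpow_lt_top_of_nonneg (by norm_num)
                ENNReal.ofReal_ne_top).ne) ENNReal.ofReal_ne_top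
        _ = Real.sqrt P * M := by
            rw [ENNReal.toReal_mul, hμuniv, ← ENNReal.toReal_rpow,
              ENNReal.toReal_ofReal hP.le, ENNReal.toReal_ofReal hM0,
              Real.sqrt_eq_rpow]
            norm_num
    calc ‖F‖ ^ 2 ≤ (Real.sqrt P * M) ^ 2 := by
          apply pow_le_pow_left₀ (norm_nonneg _) h2
      _ = P * M ^ 2 := by rw [mul_pow, Real.sq_sqrt hP.le]
  -- put everything together
  have hsum2 : Summable fun v : Fin n → ℤ => ‖fourierCoeff' g I v‖ ^ 2 :=
    (hsumm.mul_left (((c * P)⁻¹) ^ 2)).congr fun v => (hcoefnorm v).symm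
  have h4 : (c * P) ^ 2 = P := by
    rw [mul_pow, hc2, sq, ← mul_assoc, inv_mul_cancel₀ hP.ne', one_mul]
  have h3 : ((c * P)⁻¹) ^ 2 * (P * M ^ 2) = M ^ 2 := by
    rw [← mul_assoc, inv_pow, h4, inv_mul_cancel₀ hP.ne', one_mul]
  have hle : ∑' v : Fin n → ℤ, ‖fourierCoeff' g I v‖ ^ 2 ≤ M ^ 2 := by
    calc ∑' v : Fin n → ℤ, ‖fourierCoeff' g I v‖ ^ 2
        = ((c * P)⁻¹) ^ 2 * ∑' v : Fin n → ℤ, ‖(inner ℂ (E v) F : ℂ)‖ ^ 2 := by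
          rw [tsum_congr hcoefnorm, tsum_mul_left]
      _ ≤ ((c * P)⁻¹) ^ 2 * (P * M ^ 2) :=
          mul_le_mul_of_nonneg_left (hbessel.trans hFnorm) (by positivity)
      _ = M ^ 2 := h3
  calc ∑' v : Fin n → ℤ, ((‖fourierCoeff' g I v‖₊ : ENNReal)) ^ 2
      = ∑' v : Fin n → ℤ, ENNReal.ofReal (‖fourierCoeff' g I v‖ ^ 2) := by
        refine tsum_congr fun v => ?_
        rw [ENNReal.ofReal_pow (norm_nonneg _), ofReal_norm, enorm_eq_nnnorm]
    _ = ENNReal.ofReal (∑' v : Fin n → ℤ, ‖fourierCoeff' g I v‖ ^ 2) :=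
        (ENNReal.ofReal_tsum_of_nonneg (fun v => sq_nonneg _) hsum2).symm
    _ ≤ ENNReal.ofReal (M ^ 2) := ENNReal.ofReal_le_ofReal hle

lemma mul_le_sq_add (a b : ENNReal) : a * b ≤ a ^ 2 + b ^ 2 := by
  rcases le_total a b with h | h
  · calc a * b ≤ b * b := mul_le_mul' h le_rfl
      _ = b ^ 2 := (sq b).symm
      _ ≤ a ^ 2 + b ^ 2 := le_add_self
  · calc a * b ≤ a * a := mul_le_mul' le_rfl h
      _ = a ^ 2 := (sq a).symm
      _ ≤ a ^ 2 + b ^ 2 := le_self_add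

/-- for `G ∈ C_b(Ω_𝓘 × 𝕋ⁿ)` and `f₀ ∈ C_c(Ω × 𝕋ⁿ)`, the quantity
`∫_Ω Σ_{v ∈ ℤⁿ} |Ĝ(I + 𝓘(t), v)| |f̂₀(I, −v)| dI` is finite for each fixed `t ≥ 0`. -/
theorem fourier_series_integral_finite
    {n : ℕ} (Ω : Set (Fin n → ℝ)) (hΩ : IsOpen Ω)
    (𝓘 : ℝ → Fin n → ℝ) (h𝓘 : ∃ C : ℝ, ∀ t : ℝ, 0 ≤ t → ‖𝓘 t‖ ≤ C)
    (Ω𝓘 : Set (Fin n → ℝ))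
    (hΩ𝓘 : Ω𝓘 = {x | ∃ I ∈ Ω, ∃ t : ℝ, 0 ≤ t ∧ x = I + 𝓘 t})
    (G : (Fin n → ℝ) → (Fin n → ℝ) → ℂ)
    (hGcont : ContinuousOn (fun q : (Fin n → ℝ) × (Fin n → ℝ) => G q.1 q.2)
      (Ω𝓘 ×ˢ (Set.univ : Set (Fin n → ℝ))))
    (hGbdd : ∃ M : ℝ, ∀ I ∈ Ω𝓘, ∀ θ, ‖G I θ‖ ≤ M)
    (hGper : ∀ I θ (i : Fin n), G I (θ + fun j => if j = i then 2 * Real.pi else 0) = G I θ)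
    (f₀ : (Fin n → ℝ) → (Fin n → ℝ) → ℂ)
    (hf₀cont : Continuous (fun q : (Fin n → ℝ) × (Fin n → ℝ) => f₀ q.1 q.2))
    (hf₀supp : HasCompactSupport (fun q : (Fin n → ℝ) × (Fin n → ℝ) => f₀ q.1 q.2))
    (hf₀dom : ∀ q : (Fin n → ℝ) × (Fin n → ℝ),
      f₀ q.1 q.2 ≠ 0 → q.1 ∈ Ω ∧ q.2 ∈ torusBox n)
    (t : ℝ) (ht : 0 ≤ t) :
    (∫⁻ I in Ω, ∑' v : Fin n → ℤ,
        (‖fourierCoeff' G (I + 𝓘 t) v‖₊ * ‖fourierCoeff' f₀ I (-v)‖₊ : ENNReal)) < ⊤ := by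
  obtain ⟨M, hM⟩ := hGbdd
  obtain ⟨Mf, hMf⟩ := hf₀cont.bounded_above_of_compact_support hf₀supp
  -- membership of shifted points
  have hmem : ∀ I ∈ Ω, I + 𝓘 t ∈ Ω𝓘 := fun I hI => by
    rw [hΩ𝓘]; exact ⟨I, hI, t, ht, rfl⟩
  -- continuity of slices
  have hGc : ∀ I ∈ Ω, Continuous fun θ => G (I + 𝓘 t) θ := by
    intro I hI
    rw [← continuousOn_univ]
    exact hGcont.comp
      ((continuous_const.prodMk continuous_id).continuousOn :
        ContinuousOn (fun θ : Fin n → ℝ => ((I + 𝓘 t, θ) : (Fin n → ℝ) × (Fin n → ℝ))) Set.univ)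
      (fun θ _ => ⟨hmem I hI, Set.mem_univ θ⟩)
  have hfc : ∀ I : Fin n → ℝ, Continuous fun θ => f₀ I θ := fun I =>
    hf₀cont.comp (continuous_const.prodMk continuous_id)
  -- the compact set carrying the support in the I variable
  set K : Set (Fin n → ℝ) :=
    Prod.fst '' (tsupport fun q : (Fin n → ℝ) × (Fin n → ℝ) => f₀ q.1 q.2) with hK
  have hKc : IsCompact K := hf₀supp.image continuous_fst
  have hKzero : ∀ I ∉ K, ∀ v : Fin n → ℤ, fourierCoeff' f₀ I v = 0 := by
    intro I hI v
    have hz : ∀ θ, f₀ I θ = 0 := by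
      intro θ
      by_contra hne
      exact hI ⟨(I, θ), subset_tsupport _ hne, rfl⟩
    rw [fourierCoeff']
    have : (fun θ => f₀ I θ * Complex.exp (-(Complex.I * ((∑ i, (v i : ℝ) * θ i : ℝ) : ℂ))))
        = fun _ => (0 : ℂ) := funext fun θ => by rw [hz θ, zero_mul]
    rw [this, integral_zero, smul_zero]
  -- the uniform bound
  set B : ENNReal := ENNReal.ofReal (M ^ 2) + ENNReal.ofReal (Mf ^ 2) with hB
  have key : ∀ I ∈ Ω,
      (∑' v : Fin n → ℤ,
        (‖fourierCoeff' G (I + 𝓘 t) v‖₊ * ‖fourierCoeff' f₀ I (-v)‖₊ : ENNReal))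
      ≤ K.indicator (fun _ => B) I := by
    intro I hI
    by_cases hIK : I ∈ K
    · rw [Set.indicator_of_mem hIK]
      calc (∑' v : Fin n → ℤ,
            (‖fourierCoeff' G (I + 𝓘 t) v‖₊ * ‖fourierCoeff' f₀ I (-v)‖₊ : ENNReal))
          ≤ ∑' v : Fin n → ℤ,
            ((‖fourierCoeff' G (I + 𝓘 t) v‖₊ : ENNReal) ^ 2
              + (‖fourierCoeff' f₀ I (-v)‖₊ : ENNReal) ^ 2) :=
            ENNReal.tsum_le_tsum fun v => mul_le_sq_add _ _
        _ = (∑' v : Fin n → ℤ, (‖fourierCoeff' G (I + 𝓘 t) v‖₊ : ENNReal) ^ 2)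
              + ∑' v : Fin n → ℤ, (‖fourierCoeff' f₀ I (-v)‖₊ : ENNReal) ^ 2 :=
            ENNReal.tsum_add
        _ ≤ ENNReal.ofReal (M ^ 2) + ENNReal.ofReal (Mf ^ 2) := by
            refine add_le_add ?_ ?_
            · exact bessel' G (I + 𝓘 t) (hGc I hI) (hM _ (hmem I hI))
            · have hre : ∑' v : Fin n → ℤ, (‖fourierCoeff' f₀ I (-v)‖₊ : ENNReal) ^ 2
                  = ∑' v : Fin n → ℤ, (‖fourierCoeff' f₀ I v‖₊ : ENNReal) ^ 2 :=
                (Equiv.neg (Fin n → ℤ)).tsum_eq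
                  fun v => (‖fourierCoeff' f₀ I v‖₊ : ENNReal) ^ 2
              rw [hre]
              exact bessel' f₀ I (hfc I) (fun θ => hMf (I, θ))
        _ = B := hB.symm
    · rw [Set.indicator_of_notMem hIK]
      have : ∀ v : Fin n → ℤ,
          (‖fourierCoeff' G (I + 𝓘 t) v‖₊ * ‖fourierCoeff' f₀ I (-v)‖₊ : ENNReal) = 0 := by
        intro v
        rw [hKzero I hIK (-v)]
        simp
      rw [tsum_congr this]
      simp
  calc (∫⁻ I in Ω, ∑' v : Fin n → ℤ,
        (‖fourierCoeff' G (I + 𝓘 t) v‖₊ * ‖fourierCoeff' f₀ I (-v)‖₊ : ENNReal))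
      ≤ ∫⁻ I in Ω, K.indicator (fun _ => B) I := by
        apply lintegral_mono_ae
        rw [ae_restrict_iff' hΩ.measurableSet]
        exact ae_of_all _ key
    _ ≤ ∫⁻ I, K.indicator (fun _ => B) I :=
        lintegral_mono' Measure.restrict_le_self le_rfl
    _ = B * volume K := lintegral_indicator_const hKc.isClosed.measurableSet B
    _ < ⊤ := ENNReal.mul_lt_top
        (by rw [hB]; exact ENNReal.add_lt_top.mpr ⟨ENNReal.ofReal_lt_top, ENNReal.ofReal_lt_top⟩)
        hKc.measure_lt_top
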